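/- arXiv:1309.6017 — 2 statements merged into one kernel-verified Lean document; each statement's English description precedes it below -/
import Mathlib

section
/- Let D be a positive definite symmetric real n×n matrix with eigenvalues d_1,...,d_n and trace T = tr(D). If every eigenvalue satisfies d_i < T/(2+√2), then for every symmetric n×n matrix h one has ⟨D,h⟩² − tr((D∘h)²) + T·⟨D∘h, h⟩ ≤ (1/2)·T²·|h|², where ⟨A,B⟩ = tr(AB) and |h|² = tr(h²). -/
lemma aux_eig (T d : ℝ) (hd : 0 < d) (hdT : d < T / (2 + Real.sqrt 2)) :
    2 * T * d - d ^ 2 ≤ T ^ 2 / 2 := by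
  have hs2 : Real.sqrt 2 * Real.sqrt 2 = 2 := Real.mul_self_sqrt (by norm_num)
  have hs2n : (1:ℝ) ≤ Real.sqrt 2 := by nlinarith [Real.sqrt_nonneg 2]
  have hpos : (0:ℝ) < 2 + Real.sqrt 2 := by linarith
  have h1 : d * (2 + Real.sqrt 2) < T := by
    rw [lt_div_iff₀ hpos] at hdT; linarith
  have key1 : Real.sqrt 2 * (T - d) - T ≥ 0 := by
    nlinarith [mul_le_mul_of_nonneg_left h1.le (by linarith : (0:ℝ) ≤ Real.sqrt 2 - 1)]
  have key2 : Real.sqrt 2 * (T - d) + T ≥ 0 := by nlinarith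
  nlinarith [mul_nonneg key1 key2]

open Finset in
lemma key_sum (n : ℕ) (d : Fin n → ℝ) (H : Matrix (Fin n) (Fin n) ℝ)
    (hH : ∀ i j, H j i = H i j)
    (hd : ∀ i, 0 < d i)
    (haux : ∀ i, 2 * (∑ k, d k) * d i - d i ^ 2 ≤ (∑ k, d k) ^ 2 / 2)
    (hle : ∀ i, d i ≤ ∑ k, d k) :
    (∑ i, d i * H i i) ^ 2 - (∑ i, ∑ j, d i * H i j * (d j * H j i))
      + (∑ k, d k) * (∑ i, ∑ j, d i * (H i j * H j i))
      ≤ 1 / 2 * (∑ k, d k) ^ 2 * (∑ i, ∑ j, H i j * H j i) := by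
  set T := ∑ k, d k with hT
  have cs : (∑ i, d i * H i i) ^ 2 ≤ T * ∑ i, d i * H i i ^ 2 := by
    have h := Finset.sum_mul_sq_le_sq_mul_sq Finset.univ
      (fun i => Real.sqrt (d i)) (fun i => Real.sqrt (d i) * H i i)
    have e1 : ∀ i : Fin n, Real.sqrt (d i) * (Real.sqrt (d i) * H i i) = d i * H i i := by
      intro i; rw [← mul_assoc, Real.mul_self_sqrt (hd i).le]
    have e2 : ∀ i : Fin n, Real.sqrt (d i) ^ 2 = d i := fun i => Real.sq_sqrt (hd i).le
    have e3 : ∀ i : Fin n, (Real.sqrt (d i) * H i i) ^ 2 = d i * H i i ^ 2 := by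
      intro i; rw [mul_pow, e2]
    simp only [e1, e2, e3] at h
    exact h
  have main : T * (∑ i, d i * H i i ^ 2)
      + ∑ i, ∑ j, (T * d i - d i * d j) * H i j ^ 2
      ≤ ∑ i, ∑ j, T ^ 2 / 2 * H i j ^ 2 := by
    have e4 : T * (∑ i, d i * H i i ^ 2)
        = ∑ i, ∑ j, (if j = i then T * d i * H i j ^ 2 else 0) := by
      rw [Finset.mul_sum]
      refine Finset.sum_congr rfl fun i _ => ?_
      rw [Finset.sum_ite_eq' Finset.univ i (fun j => T * d i * H i j ^ 2)]
      simp [mul_assoc]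
    rw [e4, ← Finset.sum_add_distrib]
    refine Finset.sum_le_sum fun i _ => ?_
    rw [← Finset.sum_add_distrib]
    refine Finset.sum_le_sum fun j _ => ?_
    by_cases hij : j = i
    · subst hij
      simp only [if_true]
      nlinarith [mul_le_mul_of_nonneg_right (haux j) (sq_nonneg (H j j))]
    · simp only [if_neg hij, zero_add]
      refine mul_le_mul_of_nonneg_right ?_ (sq_nonneg _)
      nlinarith [haux i, hd i, hd j, hle i, mul_pos (hd i) (hd j)]
  have e6 : ∑ i, ∑ j, (T * d i - d i * d j) * H i j ^ 2
      = T * (∑ i, ∑ j, d i * (H i j * H j i))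
        - ∑ i, ∑ j, d i * H i j * (d j * H j i) := by
    rw [Finset.mul_sum, ← Finset.sum_sub_distrib]
    refine Finset.sum_congr rfl fun i _ => ?_
    rw [Finset.mul_sum, ← Finset.sum_sub_distrib]
    refine Finset.sum_congr rfl fun j _ => ?_
    rw [hH i j]; ring
  have e7 : ∑ i, ∑ j, T ^ 2 / 2 * H i j ^ 2
      = 1 / 2 * T ^ 2 * (∑ i, ∑ j, H i j * H j i) := by
    rw [Finset.mul_sum]
    refine Finset.sum_congr rfl fun i _ => ?_
    rw [Finset.mul_sum]
    refine Finset.sum_congr rfl fun j _ => ?_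
    rw [hH i j]; ring
  have e8 : ∑ i, d i * H i i ^ 2 = ∑ i, d i * H i i ^ 2 := rfl
  linarith [main, cs, e6.symm.le, e6.le, e7.le, e7.symm.le,
    (by linarith [main, e6, e7] :
      T * (∑ i, d i * H i i ^ 2)
        + (T * (∑ i, ∑ j, d i * (H i j * H j i))
            - ∑ i, ∑ j, d i * H i j * (d j * H j i))
      ≤ 1 / 2 * T ^ 2 * (∑ i, ∑ j, H i j * H j i))]

/-- If every eigenvalue of a positive definite symmetric real matrix `D` is less than
`tr D / (2 + √2)`, then for every symmetric matrix `h`,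
`⟨D,h⟩² − tr((D∘h)²) + tr D · ⟨D∘h, h⟩ ≤ (1/2) (tr D)² |h|²`. -/
theorem stmt0 (n : ℕ) (D : Matrix (Fin n) (Fin n) ℝ)
    (hDsymm : D.IsSymm) (hpd : D.PosDef)
    (heig : ∀ i, hpd.1.eigenvalues i < D.trace / (2 + Real.sqrt 2)) :
    ∀ h : Matrix (Fin n) (Fin n) ℝ, h.IsSymm →
      (D * h).trace ^ 2 - ((D * h) * (D * h)).trace
        + D.trace * ((D * h) * h).trace
      ≤ (1 / 2) * D.trace ^ 2 * (h * h).trace := by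
  intro h hsymm
  have hU := hpd.1
  set U : Matrix (Fin n) (Fin n) ℝ := (hU.eigenvectorUnitary : Matrix (Fin n) (Fin n) ℝ) with hUdef
  set d : Fin n → ℝ := hU.eigenvalues with hddef
  have hUU : star U * U = 1 := Matrix.mem_unitaryGroup_iff'.mp (hU.eigenvectorUnitary).2
  have hUU' : U * star U = 1 := Matrix.mem_unitaryGroup_iff.mp (hU.eigenvectorUnitary).2
  have hspec : D = U * Matrix.diagonal d * star U := by
    have := hU.spectral_theorem
    simpa using this
  have key_tr : ∀ M : Matrix (Fin n) (Fin n) ℝ, (U * M * star U).trace = M.trace := by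
    intro M
    rw [Matrix.trace_mul_cycle, hUU, Matrix.one_mul]
  have mul_conj : ∀ A B : Matrix (Fin n) (Fin n) ℝ,
      (U * A * star U) * (U * B * star U) = U * (A * B) * star U := by
    intro A B
    rw [Matrix.mul_assoc (U * A) (star U) (U * B * star U),
      ← Matrix.mul_assoc (star U) (U * B) (star U),
      ← Matrix.mul_assoc (star U) U B, hUU, Matrix.one_mul,
      ← Matrix.mul_assoc (U * A) B (star U), Matrix.mul_assoc U A B]
  set H : Matrix (Fin n) (Fin n) ℝ := star U * h * U with hHdef
  have hh : h = U * H * star U := by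
    rw [hHdef, ← Matrix.mul_assoc, ← Matrix.mul_assoc, hUU',
      Matrix.one_mul, Matrix.mul_assoc, hUU', Matrix.mul_one]
  have hDh : D * h = U * (Matrix.diagonal d * H) * star U := by
    rw [hspec, hh, mul_conj]
  -- symmetry of H
  have hstarh : star h = h := by
    rw [Matrix.star_eq_conjTranspose]
    ext i j
    simpa using hsymm.apply i j
  have hHsymm : ∀ i j, H j i = H i j := by
    have hsH : star H = H := by
      rw [hHdef]
      simp only [StarMul.star_mul, star_star, hstarh]
      rw [Matrix.mul_assoc]
    intro i j
    have := congrFun (congrFun (congrArg (fun M => M) hsH) i) j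
    rw [Matrix.star_eq_conjTranspose] at hsH
    have h2 : H.conjTranspose i j = H i j := congrFun (congrFun hsH i) j
    simpa [Matrix.conjTranspose_apply] using h2
  -- trace formulas
  have trΛ : ∀ M : Matrix (Fin n) (Fin n) ℝ,
      (Matrix.diagonal d * M).trace = ∑ i, d i * M i i := by
    intro M
    simp [Matrix.trace, Matrix.diag, Matrix.diagonal_mul]
  have tD : D.trace = ∑ i, d i := by
    rw [hspec, key_tr, Matrix.trace_diagonal]
  have t1 : (D * h).trace = ∑ i, d i * H i i := by
    rw [hDh, key_tr, trΛ]
  have t2 : ((D * h) * (D * h)).trace = ∑ i, ∑ j, d i * H i j * (d j * H j i) := by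
    rw [hDh, mul_conj, key_tr]
    simp [Matrix.trace, Matrix.diag, Matrix.mul_apply, Matrix.diagonal_apply, ite_mul,
      Finset.sum_ite_eq, Finset.mul_sum]
  have t3 : ((D * h) * h).trace = ∑ i, ∑ j, d i * (H i j * H j i) := by
    rw [hDh, hh, mul_conj, key_tr]
    simp [Matrix.trace, Matrix.diag, Matrix.mul_apply, Matrix.diagonal_apply, ite_mul,
      Finset.sum_ite_eq, Finset.mul_sum, mul_assoc]
  have t4 : (h * h).trace = ∑ i, ∑ j, H i j * H j i := by
    conv_lhs => rw [hh]
    rw [mul_conj, key_tr]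
    simp [Matrix.trace, Matrix.diag, Matrix.mul_apply]
  have hd : ∀ i, 0 < d i := fun i => hpd.eigenvalues_pos i
  have hle : ∀ i, d i ≤ ∑ k, d k := by
    intro i
    exact Finset.single_le_sum (fun k _ => (hd k).le) (Finset.mem_univ i)
  have heig' : ∀ i, d i < (∑ k, d k) / (2 + Real.sqrt 2) := by
    intro i; have := heig i; rwa [tD] at this
  have haux : ∀ i, 2 * (∑ k, d k) * d i - d i ^ 2 ≤ (∑ k, d k) ^ 2 / 2 :=
    fun i => aux_eig _ _ (hd i) (heig' i)
  rw [t1, t2, t3, t4, tD]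
  exact key_sum n d H hHsymm hd haux hle
end

section
/- For every integer q ≥ 4, each of the following quantities is strictly less than q − 1/2: (i) −249/256 + 1/(2q) + 249q/256; (ii) −1/4 + 1/q + 21/(8√2·√q) + q/2; (iii) (3√2/7)(√q − 1/√q); (iv) 57/25 + 25/(8q); (v) 2/q; (vi) −1 + 1/(2q) + q. -/
/-- For every integer `q ≥ 4`, each of the six coefficient bounds is strictly
less than `q − 1/2`. -/
theorem stmt18 (q : ℕ) (hq : 4 ≤ q) :
    (-249 / 256 + 1 / (2 * (q : ℝ)) + 249 * q / 256 < (q : ℝ) - 1 / 2) ∧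
    (-1 / 4 + 1 / (q : ℝ) + 21 / (8 * Real.sqrt 2 * Real.sqrt q) + (q : ℝ) / 2
        < (q : ℝ) - 1 / 2) ∧
    ((3 * Real.sqrt 2 / 7) * (Real.sqrt q - 1 / Real.sqrt q) < (q : ℝ) - 1 / 2) ∧
    (57 / 25 + 25 / (8 * (q : ℝ)) < (q : ℝ) - 1 / 2) ∧
    (2 / (q : ℝ) < (q : ℝ) - 1 / 2) ∧
    (-1 + 1 / (2 * (q : ℝ)) + (q : ℝ) < (q : ℝ) - 1 / 2) := by
  have hx : (4 : ℝ) ≤ (q : ℝ) := by exact_mod_cast hq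
  have hx0 : (0 : ℝ) < (q : ℝ) := by linarith
  -- sqrt facts
  have hs2sq : Real.sqrt 2 ^ 2 = 2 := Real.sq_sqrt (by norm_num)
  have hs2nn : (0 : ℝ) ≤ Real.sqrt 2 := Real.sqrt_nonneg 2
  have hs2one : (1 : ℝ) ≤ Real.sqrt 2 := by nlinarith
  have hs2le : Real.sqrt 2 ≤ 3 / 2 := by nlinarith
  have hsq : (2 : ℝ) ≤ Real.sqrt q := by
    have : Real.sqrt 4 ≤ Real.sqrt q := Real.sqrt_le_sqrt hx
    rwa [show (4 : ℝ) = 2 ^ 2 by norm_num, Real.sqrt_sq (by norm_num)] at this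
  have hsqsq : Real.sqrt q ^ 2 = (q : ℝ) := Real.sq_sqrt (le_of_lt hx0)
  have hsq0 : (0 : ℝ) < Real.sqrt q := by linarith
  -- bounds on reciprocals
  have h1 : 1 / (2 * (q : ℝ)) ≤ 1 / 8 :=
    one_div_le_one_div_of_le (by norm_num) (by linarith)
  have h2 : 1 / (q : ℝ) ≤ 1 / 4 := one_div_le_one_div_of_le (by norm_num) hx
  have h3 : 21 / (8 * Real.sqrt 2 * Real.sqrt q) ≤ 21 / 16 := by
    apply div_le_div_of_nonneg_left (by norm_num) (by norm_num)
    nlinarith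
  have h4 : 25 / (8 * (q : ℝ)) ≤ 25 / 32 := by
    apply div_le_div_of_nonneg_left (by norm_num) (by norm_num)
    linarith
  have h5 : 2 / (q : ℝ) ≤ 1 / 2 := by
    rw [div_le_iff₀ hx0]; linarith
  refine ⟨by linarith, by linarith, ?_, by linarith, by linarith, by linarith⟩
  have hinv : (0 : ℝ) < 1 / Real.sqrt q := by positivity
  have hsqx : Real.sqrt q ≤ (q : ℝ) / 2 := by nlinarith
  have hinv2 : 1 / Real.sqrt q ≤ 1 / 2 := one_div_le_one_div_of_le (by norm_num) hsq
  have hd : Real.sqrt q - 1 / Real.sqrt q ≤ Real.sqrt q := by linarith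
  have hc : 3 * Real.sqrt 2 / 7 ≤ 9 / 14 := by linarith
  nlinarith [mul_le_mul hc hd (by linarith) (by norm_num)]
end
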